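/- arXiv:0710.1543 — 7 statements merged into one kernel-verified Lean document; each statement's English description precedes it below -/
import Mathlib

section
/- Let K be a commutative ring in which 2 is invertible, 𝔪 a K-module, and [·,·,·] : 𝔪×𝔪×𝔪 → 𝔪 a trilinear map satisfying (LT1) [X,Y,Z] = -[Y,X,Z] and (LT2) [X,Y,Z] + [Y,Z,X] + [Z,X,Y] = 0. Write R(X,Y)Z := [X,Y,Z], M(X,Z)Y := [X,Y,Z]. Then the following conditions on the bracket are pairwise equivalent: (LT3) R(X,Y)[U,V,W] = [R(X,Y)U,V,W] + [U,R(X,Y)V,W] + [U,V,R(X,Y)W] for all X,Y,U,V,W; (LT3a) [R(X,Y), R(U,V)] = R(R(X,Y)U, V) + R(U, R(X,Y)V) for all X,Y,U,V (bracket = commutator of endomorphisms); (LT3b) [R(X,Y), M(U,W)] = M(R(X,Y)U, W) + M(U, R(X,Y)W) for all X,Y,U,W; (LT3c) M(X, R(U,V)W) = -M(V,W)∘M(X,U) + M(U,W)∘M(X,V) + R(U,V)∘M(X,W) for all X,U,V,W. -/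
/- For a trilinear bracket T = [·,·,·] on a K-module 𝔪 satisfying (LT1) and
(LT2), the conditions (LT3), (LT3a), (LT3b), (LT3c) are pairwise equivalent,
where R(X,Y)Z = [X,Y,Z] = T X Y Z and M(X,Z)Y = [X,Y,Z] = (T X).flip Z Y,
and [·,·] on endomorphisms is the commutator. -/
theorem derivation_operator_forms_equivalent
    (K : Type*) [CommRing K] [Invertible (2 : K)]
    (𝔪 : Type*) [AddCommGroup 𝔪] [Module K 𝔪]
    (T : 𝔪 →ₗ[K] 𝔪 →ₗ[K] 𝔪 →ₗ[K] 𝔪)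
    (lt1 : ∀ X Y Z, T X Y Z = - T Y X Z)
    (lt2 : ∀ X Y Z, T X Y Z + T Y Z X + T Z X Y = 0) :
    -- (LT3) ↔ (LT3a)
    ((∀ X Y U V W, T X Y (T U V W) =
        T (T X Y U) V W + T U (T X Y V) W + T U V (T X Y W)) ↔
      (∀ X Y U V, T X Y * T U V - T U V * T X Y =
        T (T X Y U) V + T U (T X Y V))) ∧
    -- (LT3) ↔ (LT3b)
    ((∀ X Y U V W, T X Y (T U V W) =
        T (T X Y U) V W + T U (T X Y V) W + T U V (T X Y W)) ↔
      (∀ X Y U W, T X Y * (T U).flip W - (T U).flip W * T X Y =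
        (T (T X Y U)).flip W + (T U).flip (T X Y W))) ∧
    -- (LT3) ↔ (LT3c)
    ((∀ X Y U V W, T X Y (T U V W) =
        T (T X Y U) V W + T U (T X Y V) W + T U V (T X Y W)) ↔
      (∀ X U V W, (T X).flip (T U V W) =
        -((T V).flip W * (T X).flip U) + (T U).flip W * (T X).flip V +
          T U V * (T X).flip W)) := by
  refine ⟨⟨fun h X Y U V => ?_, fun h X Y U V W => ?_⟩,
          ⟨fun h X Y U W => ?_, fun h X Y U V W => ?_⟩,
          ⟨fun h X U V W => ?_, fun h X Y U V W => ?_⟩⟩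
  · ext W
    simp only [LinearMap.sub_apply, Module.End.mul_apply, LinearMap.add_apply]
    rw [h X Y U V W]; abel
  · have h2 := LinearMap.congr_fun (h X Y U V) W
    simp only [LinearMap.sub_apply, Module.End.mul_apply, LinearMap.add_apply] at h2
    have := sub_eq_iff_eq_add.mp h2
    rw [this]; try abel
  · ext V
    simp only [LinearMap.sub_apply, Module.End.mul_apply, LinearMap.add_apply,
      LinearMap.flip_apply]
    rw [h X Y U V W]; abel
  · have h2 := LinearMap.congr_fun (h X Y U W) V
    simp only [LinearMap.sub_apply, Module.End.mul_apply, LinearMap.add_apply,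
      LinearMap.flip_apply] at h2
    have := sub_eq_iff_eq_add.mp h2
    rw [this]; try abel
  · ext Y
    simp only [LinearMap.add_apply, LinearMap.neg_apply, Module.End.mul_apply,
      LinearMap.flip_apply]
    rw [h X Y U V W, lt1 V (T X Y U) W]; abel
  · have h2 := LinearMap.congr_fun (h X U V W) Y
    simp only [LinearMap.add_apply, LinearMap.neg_apply, Module.End.mul_apply,
      LinearMap.flip_apply] at h2
    rw [h2, lt1 V (T X Y U) W]; abel
end

section
/- Let K be a commutative ring in which 2 is invertible, let (𝔪, [·,·,·]) be a Lie triple system over K with R(X,Y)Z := [X,Y,Z], let V be a K-module, and let r, m : 𝔪×𝔪 → End_K(V) be bilinear maps. Define a trilinear bracket on the K-module 𝔪 ⊕ V by [X⊕u, Y⊕v, Z⊕w] := [X,Y,Z] ⊕ (r(X,Y)w + m(X,Z)v - m(Y,Z)u). Then 𝔪 ⊕ V with this bracket is a Lie triple system (satisfies (LT1), (LT2), (LT3)) if and only if r and m satisfy: (R1) r(X,Y) = -r(Y,X); (R2) m(X,Z) - m(Z,X) = r(X,Z); (R3) r(R(X,Y)U, V) + r(U, R(X,Y)V) = [r(X,Y),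 r(U,V)] and m(R(X,Y)U, V) + m(U, R(X,Y)V) = [r(X,Y), m(U,V)]; (R4) m(X, R(U,V)W) - r(U,V)∘m(X,W) = m(U,W)∘m(X,V) - m(V,W)∘m(X,U). -/
/- Lemma 2.6: for a Lie triple system (𝔪, T) and bilinear maps
r, m : 𝔪 × 𝔪 → End_K(V), the trilinear bracket on 𝔪 ⊕ V defined by
[X⊕u, Y⊕v, Z⊕w] := [X,Y,Z] ⊕ (r(X,Y)w + m(X,Z)v - m(Y,Z)u)
makes 𝔪 ⊕ V a Lie triple system iff (r,m) satisfies (R1)-(R4). -/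
theorem split_null_extension_lts_iff_representation
    (K : Type*) [CommRing K] [Invertible (2 : K)]
    (𝔪 : Type*) [AddCommGroup 𝔪] [Module K 𝔪]
    (V : Type*) [AddCommGroup V] [Module K V]
    (T : 𝔪 →ₗ[K] 𝔪 →ₗ[K] 𝔪 →ₗ[K] 𝔪)
    (lt1 : ∀ X Y Z, T X Y Z = - T Y X Z)
    (lt2 : ∀ X Y Z, T X Y Z + T Y Z X + T Z X Y = 0)
    (lt3 : ∀ X Y U W Z, T X Y (T U W Z) =
      T (T X Y U) W Z + T U (T X Y W) Z + T U W (T X Y Z))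
    (r m : 𝔪 →ₗ[K] 𝔪 →ₗ[K] Module.End K V) :
    (let B : 𝔪 × V → 𝔪 × V → 𝔪 × V → 𝔪 × V := fun a b c =>
      (T a.1 b.1 c.1, r a.1 b.1 c.2 + m a.1 c.1 b.2 - m b.1 c.1 a.2)
     -- (LT1), (LT2), (LT3) on 𝔪 ⊕ V
     (∀ a b c, B a b c = - B b a c) ∧
     (∀ a b c, B a b c + B b c a + B c a b = 0) ∧
     (∀ a b u v w, B a b (B u v w) =
       B (B a b u) v w + B u (B a b v) w + B u v (B a b w)))
    ↔
    -- (R1)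
    ((∀ X Y, r X Y = - r Y X) ∧
     -- (R2)
     (∀ X Z, m X Z - m Z X = r X Z) ∧
     -- (R3), first identity
     (∀ X Y U W, r (T X Y U) W + r U (T X Y W) =
        r X Y * r U W - r U W * r X Y) ∧
     -- (R3), second identity
     (∀ X Y U W, m (T X Y U) W + m U (T X Y W) =
        r X Y * m U W - m U W * r X Y) ∧
     -- (R4)
     (∀ X U W Z, m X (T U W Z) - r U W * m X Z =
        m U Z * m X W - m W Z * m X U)) := by
  simp only []
  constructor
  · rintro ⟨h1, h2, h3⟩
    have R1 : ∀ X Y, r X Y = - r Y X := by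
      intro X Y
      ext w
      have := congrArg Prod.snd (h1 (X, 0) (Y, 0) (0, w))
      simpa using this
    refine ⟨R1, ?_, ?_, ?_, ?_⟩
    · intro X Z
      ext v
      have := congrArg Prod.snd (h2 (X, 0) (0, v) (Z, 0))
      simp only [map_zero, LinearMap.zero_apply, add_zero, zero_add, sub_zero,
        Prod.snd_add, Prod.snd_zero] at this
      have h := R1 Z X
      simp only [LinearMap.sub_apply, LinearMap.neg_apply]
      rw [h] at this
      simp only [LinearMap.neg_apply] at this
      linear_combination (norm := abel) this
    · intro X Y U W
      ext s
      have := congrArg Prod.snd (h3 (X, 0) (Y, 0) (U, 0) (W, 0) (0, s))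
      simp only [map_zero, LinearMap.zero_apply, add_zero, zero_add, sub_zero,
        zero_sub, Prod.snd_add] at this
      simp only [LinearMap.add_apply, LinearMap.sub_apply, Module.End.mul_apply]
      linear_combination (norm := abel) -this
    · intro X Y U W
      ext q
      have := congrArg Prod.snd (h3 (X, 0) (Y, 0) (U, 0) (0, q) (W, 0))
      simp only [map_zero, LinearMap.zero_apply, add_zero, zero_add, sub_zero,
        zero_sub, Prod.snd_add] at this
      simp only [LinearMap.add_apply, LinearMap.sub_apply, Module.End.mul_apply]
      linear_combination (norm := abel) -this
    · intro X U W Z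
      ext y
      have := congrArg Prod.snd (h3 (X, 0) (0, y) (U, 0) (W, 0) (Z, 0))
      simp only [map_zero, LinearMap.zero_apply, add_zero, zero_add, sub_zero,
        zero_sub, Prod.snd_add] at this
      simp only [LinearMap.add_apply, LinearMap.sub_apply, Module.End.mul_apply]
      linear_combination (norm := abel) this
  · rintro ⟨R1, R2, R3a, R3b, R4⟩
    have e2 : ∀ X Y : 𝔪, m Y X = m X Y - r X Y := by
      intro X Y
      have := R2 X Y
      linear_combination (norm := abel) -this
    refine ⟨?_, ?_, ?_⟩
    · intro a b c
      refine Prod.ext ?_ ?_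
      · simpa using lt1 a.1 b.1 c.1
      · simp only [Prod.snd_neg]
        rw [R1 a.1 b.1]
        simp only [LinearMap.neg_apply]
        abel
    · intro a b c
      refine Prod.ext ?_ ?_
      · simpa using lt2 a.1 b.1 c.1
      · simp only [Prod.snd_add, Prod.snd_zero]
        rw [e2 a.1 b.1, e2 a.1 c.1, e2 b.1 c.1, R1 c.1 a.1]
        simp only [LinearMap.sub_apply, LinearMap.neg_apply]
        abel
    · intro a b u v w
      refine Prod.ext ?_ ?_
      · simpa using lt3 a.1 b.1 u.1 v.1 w.1
      · obtain ⟨X, x⟩ := a; obtain ⟨Y, y⟩ := b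
        obtain ⟨U, p⟩ := u; obtain ⟨W, q⟩ := v; obtain ⟨Z, s⟩ := w
        simp only [Prod.snd_add]
        have e1 : r (T X Y U) W = (r X Y * r U W - r U W * r X Y) - r U (T X Y W) :=
          eq_sub_iff_add_eq.mpr (R3a X Y U W)
        have e3 : m (T X Y U) Z = (r X Y * m U Z - m U Z * r X Y) - m U (T X Y Z) :=
          eq_sub_iff_add_eq.mpr (R3b X Y U Z)
        have e4 : m (T X Y W) Z = (r X Y * m W Z - m W Z * r X Y) - m W (T X Y Z) :=
          eq_sub_iff_add_eq.mpr (R3b X Y W Z)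
        have e5 : m X (T U W Z) = (m U Z * m X W - m W Z * m X U) + r U W * m X Z :=
          sub_eq_iff_eq_add.mp (R4 X U W Z)
        have e6 : m Y (T U W Z) = (m U Z * m Y W - m W Z * m Y U) + r U W * m Y Z :=
          sub_eq_iff_eq_add.mp (R4 Y U W Z)
        rw [e1, e3, e4, e5, e6]
        simp only [LinearMap.sub_apply, LinearMap.add_apply, Module.End.mul_apply,
          map_add, map_sub, LinearMap.neg_apply]
        abel
end

section
/- Let K be a commutative ring in which 2 is invertible, 𝔤 a Lie algebra over K with an involutive Lie algebra automorphism σ, and 𝔪 := {X ∈ 𝔤 : σX = -X}, an Lts with bracket [X,Y,Z] := [[X,Y],Z]. Let W be a 𝔤-module with action ρ : 𝔤 → End_K(W), and let τ : W → W be a K-linear involution satisfying τ(ρ(X)w) = ρ(σX)(τw) for all X ∈ 𝔤, w ∈ W. Set W⁻ := {w ∈ W : τw = -w}. Then for all X, Y, Z ∈ 𝔪 the operators ρ([X,Y]) and ρ(Z)∘ρ(X) map W⁻ into itself, and the bilinear maps r(X,Y) := ρ([X,Y])|_{W⁻} and m(X,Z) := -(ρ(Z)∘ρ(X))|_{W⁻}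 satisfy the representation axioms (R1) r(X,Y) = -r(Y,X); (R2) m(X,Z) - m(Z,X) = r(X,Z); (R3) r([X,Y,U], V) + r(U, [X,Y,V]) = [r(X,Y), r(U,V)] and m([X,Y,U], V) + m(U, [X,Y,V]) = [r(X,Y), m(U,V)]; (R4) m(X, [U,V,W]) - r(U,V)∘m(X,W) = m(U,W)∘m(X,V) - m(V,W)∘m(X,U). In other words, W⁻ is a module over the Lie triple system 𝔪. -/
/- One direction of Lemma 3.3: if (W, τ) is a (𝔤,σ)-module with involution,
then the -1-eigenspace W⁻ of τ is invariant under ρ([X,Y]) and ρ(Z)∘ρ(X) for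
X, Y, Z in the -1-eigenspace 𝔪 of σ, and r(X,Y) := ρ([X,Y]),
m(X,Z) := -ρ(Z)∘ρ(X) satisfy (R1)-(R4) on W⁻: W⁻ is an 𝔪-module. -/
theorem module_with_involution_gives_lts_module
    (K : Type*) [CommRing K] [Invertible (2 : K)]
    (𝔤 : Type*) [LieRing 𝔤] [LieAlgebra K 𝔤]
    (σ : 𝔤 →ₗ[K] 𝔤)
    (hinv : ∀ X, σ (σ X) = X)
    (hbr : ∀ X Y, σ ⁅X, Y⁆ = ⁅σ X, σ Y⁆)
    (W : Type*) [AddCommGroup W] [Module K W]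
    (ρ : 𝔤 →ₗ[K] Module.End K W)
    (hρ : ∀ X Y, ρ ⁅X, Y⁆ = ρ X * ρ Y - ρ Y * ρ X)
    (τ : W →ₗ[K] W)
    (hτ : ∀ w, τ (τ w) = w)
    (hτρ : ∀ X w, τ (ρ X w) = ρ (σ X) (τ w)) :
    -- invariance of W⁻ under ρ([X,Y]) and ρ(Z)∘ρ(X)
    (∀ X Y : 𝔤, σ X = -X → σ Y = -Y → ∀ w, τ w = -w →
      τ (ρ ⁅X, Y⁆ w) = -(ρ ⁅X, Y⁆ w)) ∧
    (∀ X Z : 𝔤, σ X = -X → σ Z = -Z → ∀ w, τ w = -w →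
      τ (ρ Z (ρ X w)) = -(ρ Z (ρ X w))) ∧
    -- (R1)-(R4) for r(X,Y) := ρ([X,Y]), m(X,Z) := -ρ(Z)∘ρ(X) on W⁻
    (let r : 𝔤 → 𝔤 → Module.End K W := fun X Y => ρ ⁅X, Y⁆
     let m : 𝔤 → 𝔤 → Module.End K W := fun X Z => -(ρ Z * ρ X)
     -- (R1)
     (∀ X Y : 𝔤, σ X = -X → σ Y = -Y → ∀ w, τ w = -w →
       r X Y w = -(r Y X w)) ∧
     -- (R2)
     (∀ X Z : 𝔤, σ X = -X → σ Z = -Z → ∀ w, τ w = -w →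
       m X Z w - m Z X w = r X Z w) ∧
     -- (R3), first identity
     (∀ X Y U V : 𝔤, σ X = -X → σ Y = -Y → σ U = -U → σ V = -V →
       ∀ w, τ w = -w →
       r ⁅⁅X, Y⁆, U⁆ V w + r U ⁅⁅X, Y⁆, V⁆ w =
         (r X Y * r U V - r U V * r X Y) w) ∧
     -- (R3), second identity
     (∀ X Y U V : 𝔤, σ X = -X → σ Y = -Y → σ U = -U → σ V = -V →
       ∀ w, τ w = -w →
       m ⁅⁅X, Y⁆, U⁆ V w + m U ⁅⁅X, Y⁆, V⁆ w =
         (r X Y * m U V - m U V * r X Y) w) ∧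
     -- (R4)
     (∀ X U V Z : 𝔤, σ X = -X → σ U = -U → σ V = -V → σ Z = -Z →
       ∀ w, τ w = -w →
       m X ⁅⁅U, V⁆, Z⁆ w - (r U V * m X Z) w =
         (m U Z * m X V) w - (m V Z * m X U) w)) := by
  have inv1 : ∀ X Y : 𝔤, σ X = -X → σ Y = -Y → ∀ w, τ w = -w →
      τ (ρ ⁅X, Y⁆ w) = -(ρ ⁅X, Y⁆ w) := by
    intro X Y hX hY w hw
    rw [hτρ, hbr, hX, hY, hw]
    simp
  refine ⟨inv1, ?_, ?_, ?_, ?_, ?_, ?_⟩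
  · intro X Z hX hZ w hw
    rw [hτρ, hZ, hτρ, hX, hw]
    simp
  · intro X Y hX hY w hw
    show (ρ ⁅X, Y⁆) w = -((ρ ⁅Y, X⁆) w)
    rw [← lie_skew X Y, map_neg]
    simp
  · intro X Z hX hZ w hw
    show (-(ρ Z * ρ X) : Module.End K W) w - (-(ρ X * ρ Z) : Module.End K W) w = ρ ⁅X, Z⁆ w
    rw [← LinearMap.sub_apply]
    congr 1
    rw [hρ]; noncomm_ring
  · intro X Y U V hX hY hU hV w hw
    show ρ ⁅⁅⁅X, Y⁆, U⁆, V⁆ w + ρ ⁅U, ⁅⁅X, Y⁆, V⁆⁆ w =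
        (ρ ⁅X, Y⁆ * ρ ⁅U, V⁆ - ρ ⁅U, V⁆ * ρ ⁅X, Y⁆) w
    rw [← LinearMap.add_apply, ← map_add, ← leibniz_lie, hρ]
  · intro X Y U V hX hY hU hV w hw
    show (-(ρ V * ρ ⁅⁅X, Y⁆, U⁆) : Module.End K W) w + (-(ρ ⁅⁅X, Y⁆, V⁆ * ρ U) : Module.End K W) w =
        (ρ ⁅X, Y⁆ * -(ρ V * ρ U) - -(ρ V * ρ U) * ρ ⁅X, Y⁆) w
    rw [← LinearMap.add_apply]
    congr 1
    rw [hρ ⁅X, Y⁆ U, hρ ⁅X, Y⁆ V]; noncomm_ring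
  · intro X U V Z hX hU hV hZ w hw
    show (-(ρ ⁅⁅U, V⁆, Z⁆ * ρ X) : Module.End K W) w - (ρ ⁅U, V⁆ * -(ρ Z * ρ X)) w =
        (-(ρ Z * ρ U) * -(ρ V * ρ X) : Module.End K W) w - (-(ρ Z * ρ V) * -(ρ U * ρ X) : Module.End K W) w
    rw [← LinearMap.sub_apply, ← LinearMap.sub_apply]
    congr 1
    rw [hρ ⁅U, V⁆ Z, hρ U V]; noncomm_ring
end

section
/- Let K be a commutative ring in which 2 is invertible, (𝔪, [·,·,·]) a Lie triple system over K, and (V, r, m) a general representation of 𝔪 (bilinear maps r, m : 𝔪×𝔪 → End_K(V) satisfying (R1)–(R4)). For A ∈ End_K(V) let A* ∈ End_K(V*) denote the dual operator on V* = Hom_K(V, K), A*(φ) = φ∘A. Then the bilinear maps r*(X,Y) := r(Y,X)* = -r(X,Y)* and m*(X,Y) := m(Y,X)* define a general representation of 𝔪 on V*, i.e. satisfy (R1)–(R4). -/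
/-- A general representation of a Lie triple system (𝔪, T) on a K-module V:
a pair of bilinear maps r, m : 𝔪 × 𝔪 → End_K(V) satisfying (R1)-(R4). -/
def IsLTSRep (K : Type*) [CommRing K]
    (𝔪 : Type*) [AddCommGroup 𝔪] [Module K 𝔪]
    (V : Type*) [AddCommGroup V] [Module K V]
    (T : 𝔪 →ₗ[K] 𝔪 →ₗ[K] 𝔪 →ₗ[K] 𝔪)
    (r m : 𝔪 → 𝔪 → Module.End K V) : Prop :=
  -- bilinearity of r
  (∀ X X' Y, r (X + X') Y = r X Y + r X' Y) ∧
  (∀ (c : K) (X Y : 𝔪), r (c • X) Y = c • r X Y) ∧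
  (∀ X Y Y', r X (Y + Y') = r X Y + r X Y') ∧
  (∀ (c : K) (X Y : 𝔪), r X (c • Y) = c • r X Y) ∧
  -- bilinearity of m
  (∀ X X' Y, m (X + X') Y = m X Y + m X' Y) ∧
  (∀ (c : K) (X Y : 𝔪), m (c • X) Y = c • m X Y) ∧
  (∀ X Y Y', m X (Y + Y') = m X Y + m X Y') ∧
  (∀ (c : K) (X Y : 𝔪), m X (c • Y) = c • m X Y) ∧
  -- (R1)
  (∀ X Y, r X Y = - r Y X) ∧
  -- (R2)
  (∀ X Z, m X Z - m Z X = r X Z) ∧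
  -- (R3), first identity
  (∀ X Y U W, r (T X Y U) W + r U (T X Y W) =
    r X Y * r U W - r U W * r X Y) ∧
  -- (R3), second identity
  (∀ X Y U W, m (T X Y U) W + m U (T X Y W) =
    r X Y * m U W - m U W * r X Y) ∧
  -- (R4)
  (∀ X U V W, m X (T U V W) - r U V * m X W =
    m U W * m X V - m V W * m X U)

section DualHelpers

variable {K : Type*} [CommRing K] {V : Type*} [AddCommGroup V] [Module K V]

lemma dualMap_add' (A B : Module.End K V) :
    (A + B).dualMap = A.dualMap + B.dualMap := by
  ext φ v; simp

lemma dualMap_smul' (c : K) (A : Module.End K V) :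
    (c • A).dualMap = c • A.dualMap := by
  ext φ v; simp

lemma dualMap_neg' (A : Module.End K V) :
    (-A).dualMap = -A.dualMap := by
  ext φ v; simp

lemma dualMap_sub' (A B : Module.End K V) :
    (A - B).dualMap = A.dualMap - B.dualMap := by
  ext φ v; simp

lemma dualMap_mul' (A B : Module.End K V) :
    (A * B).dualMap = B.dualMap * A.dualMap := by
  ext φ v; simp [Module.End.mul_apply]

end DualHelpers

/- Section 4.2: the dual representation. If (V, r, m) is a general
representation of 𝔪, then r*(X,Y) := r(Y,X)* and m*(X,Y) := m(Y,X)*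
define a general representation of 𝔪 on the dual module V*. -/
theorem dual_representation
    (K : Type*) [CommRing K] [Invertible (2 : K)]
    (𝔪 : Type*) [AddCommGroup 𝔪] [Module K 𝔪]
    (V : Type*) [AddCommGroup V] [Module K V]
    (T : 𝔪 →ₗ[K] 𝔪 →ₗ[K] 𝔪 →ₗ[K] 𝔪)
    (lt1 : ∀ X Y Z, T X Y Z = - T Y X Z)
    (lt2 : ∀ X Y Z, T X Y Z + T Y Z X + T Z X Y = 0)
    (lt3 : ∀ X Y U V' W', T X Y (T U V' W') =
      T (T X Y U) V' W' + T U (T X Y V') W' + T U V' (T X Y W'))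
    (r m : 𝔪 → 𝔪 → Module.End K V)
    (h : IsLTSRep K 𝔪 V T r m) :
    IsLTSRep K 𝔪 (Module.Dual K V) T
      (fun X Y => (r Y X).dualMap)
      (fun X Y => (m Y X).dualMap) := by
  obtain ⟨ra1, ra2, ra3, ra4, ma1, ma2, ma3, ma4, hR1, hR2, hR3a, hR3b, hR4⟩ := h
  refine ⟨fun X X' Y => ?_, fun c X Y => ?_, fun X Y Y' => ?_, fun c X Y => ?_,
    fun X X' Y => ?_, fun c X Y => ?_, fun X Y Y' => ?_, fun c X Y => ?_,
    fun X Y => ?_, fun X Z => ?_, fun X Y U W => ?_, fun X Y U W => ?_,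
    fun X U V W => ?_⟩ <;> dsimp only
  · rw [ra3, dualMap_add']
  · rw [ra4, dualMap_smul']
  · rw [ra1, dualMap_add']
  · rw [ra2, dualMap_smul']
  · rw [ma3, dualMap_add']
  · rw [ma4, dualMap_smul']
  · rw [ma1, dualMap_add']
  · rw [ma2, dualMap_smul']
  · rw [hR1 Y X, dualMap_neg']
  · rw [← dualMap_sub', hR2 Z X]
  · -- (R3a)
    have e1 : r W (T X Y U) + r (T X Y W) U
        = r U W * r X Y - r X Y * r U W := by
      rw [hR1 W (T X Y U), hR1 (T X Y W) U, ← neg_add, hR3a X Y U W, neg_sub]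
    rw [← dualMap_add', e1, dualMap_sub', dualMap_mul', dualMap_mul',
      hR1 Y X, hR1 W U, dualMap_neg', dualMap_neg']
    ext φ v; simp [Module.End.mul_apply]; try ring
  · -- (R3b)
    have e1 : m W (T X Y U) + m (T X Y W) U
        = r X Y * m W U - m W U * r X Y := by
      rw [add_comm, hR3b X Y W U]
    rw [← dualMap_add', e1, dualMap_sub', dualMap_mul', dualMap_mul',
      hR1 Y X, dualMap_neg']
    ext φ v; simp [Module.End.mul_apply]; try ring
  · -- (R4)
    have key : m (T U V W) X
        = m V X * m W U - m U X * m W V - m W X * r U V := by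
      have h1 := hR3b U V W X
      have h2 := hR4 W U V X
      calc m (T U V W) X
          = (m (T U V W) X + m W (T U V X))
            - (m W (T U V X) - r U V * m W X) - r U V * m W X := by abel
        _ = (r U V * m W X - m W X * r U V)
            - (m U X * m W V - m V X * m W U) - r U V * m W X := by rw [h1, h2]
        _ = m V X * m W U - m U X * m W V - m W X * r U V := by abel
    rw [key, dualMap_sub', dualMap_sub', dualMap_mul', dualMap_mul',
      dualMap_mul', hR1 V U, dualMap_neg']
    ext φ v; simp [Module.End.mul_apply]; try ring
end

section
/- Let K be a commutative ring in which 2 is invertible, (𝔪, [·,·,·]) a Lie triple system over K, and T : 𝔪×𝔪×𝔪 → 𝔪 a Jordan extension of 𝔪, i.e. a Jordan triple system on 𝔪 (satisfying (JT1) and (JT2)) such that T(X,Y,Z) - T(Y,X,Z) = [X,Y,Z] for all X,Y,Z. Then the K-module 𝔪 ⊕ 𝔪 with the trilinear bracket [(X,u),(Y,v),(Z,w)] := ([X,Y,Z], [X,Y,w] - T(X,v,Z) - T(v,X,Z) + T(Y,u,Z) + T(u,Y,Z)) is a Lie triple system (satisfies (LT1), (LT2), (LT3)). Equivalently, the bilinear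 maps r̃(X,Y) := [X,Y,·] and m̃(X,Z) := -(T(X,·,Z) + T(·,X,Z)) into End_K(𝔪) form a general representation of 𝔪 on the K-module 𝔪, i.e. satisfy (R1)–(R4); its r-component r̃ coincides with the r-component R(X,Y) = [X,Y,·] of the regular representation. -/
/- Theorem 6.5 (twisted regular representation): if T is a Jordan extension
of the Lie triple system (𝔪, L), then 𝔪 ⊕ 𝔪 with the bracket
[(X,u),(Y,v),(Z,w)] := ([X,Y,Z],
  [X,Y,w] - T(X,v,Z) - T(v,X,Z) + T(Y,u,Z) + T(u,Y,Z))
is a Lie triple system; equivalently r̃(X,Y) := [X,Y,·] and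
m̃(X,Z) := -(T(X,·,Z) + T(·,X,Z)) form a general representation of 𝔪 on 𝔪,
whose r-component coincides with that of the regular representation. -/
theorem twisted_regular_representation
    (K : Type*) [CommRing K] [Invertible (2 : K)]
    (𝔪 : Type*) [AddCommGroup 𝔪] [Module K 𝔪]
    (L : 𝔪 →ₗ[K] 𝔪 →ₗ[K] 𝔪 →ₗ[K] 𝔪)
    (lt1 : ∀ X Y Z, L X Y Z = - L Y X Z)
    (lt2 : ∀ X Y Z, L X Y Z + L Y Z X + L Z X Y = 0)
    (lt3 : ∀ X Y U V W, L X Y (L U V W) =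
      L (L X Y U) V W + L U (L X Y V) W + L U V (L X Y W))
    (T : 𝔪 →ₗ[K] 𝔪 →ₗ[K] 𝔪 →ₗ[K] 𝔪)
    (jt1 : ∀ u v w, T u v w = T w v u)
    (jt2 : ∀ u v x y z, T u v (T x y z) =
      T (T u v x) y z - T x (T v u y) z + T x y (T u v z))
    (hext : ∀ X Y Z, T X Y Z - T Y X Z = L X Y Z) :
    -- 𝔪 ⊕ 𝔪 with the twisted bracket is a Lie triple system
    (let B : 𝔪 × 𝔪 → 𝔪 × 𝔪 → 𝔪 × 𝔪 → 𝔪 × 𝔪 := fun a b c =>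
      (L a.1 b.1 c.1,
       L a.1 b.1 c.2 - T a.1 b.2 c.1 - T b.2 a.1 c.1
         + T b.1 a.2 c.1 + T a.2 b.1 c.1)
     (∀ a b c, B a b c = - B b a c) ∧
     (∀ a b c, B a b c + B b c a + B c a b = 0) ∧
     (∀ a b u v w, B a b (B u v w) =
       B (B a b u) v w + B u (B a b v) w + B u v (B a b w))) ∧
    -- equivalently, (r̃, m̃) is a general representation of 𝔪 on 𝔪
    (let r : 𝔪 → 𝔪 → Module.End K 𝔪 := fun X Y => L X Y
     let m : 𝔪 → 𝔪 → Module.End K 𝔪 :=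
       fun X Z => -((T X).flip Z + (T.flip X).flip Z)
     -- (R1)
     (∀ X Y, r X Y = - r Y X) ∧
     -- (R2)
     (∀ X Z, m X Z - m Z X = r X Z) ∧
     -- (R3), first identity
     (∀ X Y U W, r (L X Y U) W + r U (L X Y W) =
       r X Y * r U W - r U W * r X Y) ∧
     -- (R3), second identity
     (∀ X Y U W, m (L X Y U) W + m U (L X Y W) =
       r X Y * m U W - m U W * r X Y) ∧
     -- (R4)
     (∀ X U V W, m X (L U V W) - r U V * m X W =
       m U W * m X V - m V W * m X U) ∧
     -- the r-component coincides with the regular one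
     (∀ X Y : 𝔪, r X Y = L X Y)) := by
  -- derivation lemma: L X Y is a derivation of T
  have hder : ∀ X Y x y z : 𝔪, L X Y (T x y z) =
      T (L X Y x) y z + T x (L X Y y) z + T x y (L X Y z) := by
    intro X Y x y z
    rw [← hext X Y x, ← hext X Y y, ← hext X Y z, ← hext X Y (T x y z)]
    simp only [map_sub, LinearMap.sub_apply]
    linear_combination (norm := abel) jt2 X Y x y z - jt2 Y X x y z
  have hR2 : ∀ X Z v : 𝔪, -(T X v Z + T v X Z) + (T Z v X + T v Z X) = L X Z v := by
    intro X Z v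
    linear_combination (norm := abel) jt1 v Z X - jt1 v X Z - jt1 X v Z + hext X Z v
  have hR3m : ∀ X Y U W v : 𝔪,
      -(T (L X Y U) v W + T v (L X Y U) W) - (T U v (L X Y W) + T v U (L X Y W))
      = -(L X Y (T U v W)) - L X Y (T v U W) + T U (L X Y v) W + T (L X Y v) U W := by
    intro X Y U W v
    rw [hder X Y U v W, hder X Y v U W]
    abel
  have hR4 : ∀ U V W X z : 𝔪,
      -(T X z (L U V W) + T z X (L U V W)) + (L U V (T X z W) + L U V (T z X W))
      = (T U (T X z V) W + T (T X z V) U W + T U (T z X V) W + T (T z X V) U W)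
        - (T V (T X z U) W + T (T X z U) V W + T V (T z X U) W + T (T z X U) V W) := by
    intro U V W X z
    rw [← hext U V W, ← hext U V (T X z W), ← hext U V (T z X W)]
    simp only [map_sub, LinearMap.sub_apply]
    linear_combination (norm := abel)
      jt2 X z V U W + jt2 z X V U W - jt2 z X U V W - jt2 X z U V W
  refine ⟨⟨?_, ?_, ?_⟩, ?_, ?_, ?_, ?_, ?_, ?_⟩
  · -- LT1
    intro a b c
    refine Prod.ext ?_ ?_ <;> simp only [Prod.fst_neg, Prod.snd_neg]
    · exact lt1 a.1 b.1 c.1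
    · linear_combination (norm := abel) lt1 a.1 b.1 c.2
  · -- LT2
    intro a b c
    refine Prod.ext ?_ ?_ <;>
      simp only [Prod.fst_add, Prod.snd_add, Prod.fst_zero, Prod.snd_zero]
    · exact lt2 a.1 b.1 c.1
    · linear_combination (norm := abel)
        jt1 a.1 b.1 c.2 - jt1 a.1 b.2 c.1 - jt1 a.1 c.1 b.2 + jt1 a.1 c.2 b.1
        + jt1 a.2 b.1 c.1 - jt1 a.2 c.1 b.1 - jt1 b.1 a.1 c.2 + jt1 b.1 a.2 c.1
        - jt1 b.2 a.1 c.1 - hext a.1 b.1 c.2 - hext b.1 c.1 a.2 - hext c.1 a.1 b.2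
  · -- LT3
    intro a b u v w
    refine Prod.ext ?_ ?_ <;>
      simp only [Prod.fst_add, Prod.snd_add, map_add, map_sub, map_neg,
        LinearMap.add_apply, LinearMap.sub_apply, LinearMap.neg_apply]
    · exact lt3 a.1 b.1 u.1 v.1 w.1
    · linear_combination (norm := abel)
        lt3 a.1 b.1 u.1 v.1 w.2 - hR3m a.1 b.1 u.1 w.1 v.2 + hR3m a.1 b.1 v.1 w.1 u.2
        + hR4 u.1 v.1 w.1 a.1 b.2 - hR4 u.1 v.1 w.1 b.1 a.2
  · -- R1
    intro X Y
    refine LinearMap.ext fun v => ?_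
    simp only [LinearMap.neg_apply]
    exact lt1 X Y v
  · -- R2
    intro X Z
    refine LinearMap.ext fun v => ?_
    simp only [LinearMap.sub_apply, LinearMap.neg_apply, LinearMap.add_apply,
      LinearMap.flip_apply]
    linear_combination (norm := abel) hR2 X Z v
  · -- R3 first
    intro X Y U W
    refine LinearMap.ext fun v => ?_
    simp only [LinearMap.add_apply, LinearMap.sub_apply, Module.End.mul_apply]
    linear_combination (norm := abel) -lt3 X Y U W v
  · -- R3 second
    intro X Y U W
    refine LinearMap.ext fun v => ?_
    simp only [LinearMap.add_apply, LinearMap.sub_apply, Module.End.mul_apply,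
      LinearMap.neg_apply, LinearMap.flip_apply, map_neg, map_add]
    linear_combination (norm := abel) hR3m X Y U W v
  · -- R4
    intro X U V W
    refine LinearMap.ext fun z => ?_
    simp only [LinearMap.add_apply, LinearMap.sub_apply, Module.End.mul_apply,
      LinearMap.neg_apply, LinearMap.flip_apply, map_neg, map_add]
    linear_combination (norm := abel) hR4 U V W X z
  · -- r coincides with regular representation
    intro X Y
    rfl
end

section
/- Let K be a commutative ring in which 2 is invertible, (𝔪, [·,·,·]) a Lie triple system over K, and T a Jordan extension of 𝔪 (a Jordan triple system on 𝔪 with T(X,Y,Z) - T(Y,X,Z) = [X,Y,Z]). Let M(X,Z) := [X,·,Z] be the m-component of the regular representation and m̃(X,Z) := -(T(X,·,Z) + T(·,X,Z)) the m-component of the twisted regular representation. If m̃(X,Z) = M(X,Z) for all X,Z ∈ 𝔪 (i.e. the twisted regular representation coincides with the regular one), then T = 0 and hence the triple bracket [·,·,·] of 𝔪 vanishes identically. Moreover, m̃ satisfies the symmetry m̃(X,Z)Y = m̃(Y,Z)X for all X,Y,Z, whereas M satisfies the antisymmetry M(X,Z)Y = -M(Y,Z)X for all X,Y,Z. -/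
/- Non-isomorphism part of Theorem 6.5: for a Jordan extension T of the Lie
triple system (𝔪, L), if the m-component m̃(X,Z)Y = -(T(X,Y,Z) + T(Y,X,Z))
of the twisted regular representation coincides with M(X,Z)Y = [X,Y,Z], then
T = 0 and hence the bracket of 𝔪 vanishes. Moreover m̃ is symmetric,
m̃(X,Z)Y = m̃(Y,Z)X, while M is antisymmetric, M(X,Z)Y = -M(Y,Z)X. -/
theorem twisted_equals_regular_implies_trivial
    (K : Type*) [CommRing K] [Invertible (2 : K)]
    (𝔪 : Type*) [AddCommGroup 𝔪] [Module K 𝔪]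
    (L : 𝔪 →ₗ[K] 𝔪 →ₗ[K] 𝔪 →ₗ[K] 𝔪)
    (lt1 : ∀ X Y Z, L X Y Z = - L Y X Z)
    (lt2 : ∀ X Y Z, L X Y Z + L Y Z X + L Z X Y = 0)
    (lt3 : ∀ X Y U V W, L X Y (L U V W) =
      L (L X Y U) V W + L U (L X Y V) W + L U V (L X Y W))
    (T : 𝔪 →ₗ[K] 𝔪 →ₗ[K] 𝔪 →ₗ[K] 𝔪)
    (jt1 : ∀ u v w, T u v w = T w v u)
    (jt2 : ∀ u v x y z, T u v (T x y z) =
      T (T u v x) y z - T x (T v u y) z + T x y (T u v z))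
    (hext : ∀ X Y Z, T X Y Z - T Y X Z = L X Y Z) :
    -- if m̃ = M then T = 0 and the bracket vanishes
    ((∀ X Z Y : 𝔪, -(T X Y Z + T Y X Z) = L X Y Z) →
      (∀ x y z : 𝔪, T x y z = 0) ∧ (∀ x y z : 𝔪, L x y z = 0)) ∧
    -- m̃(X,Z)Y = m̃(Y,Z)X
    (∀ X Y Z : 𝔪, -(T X Y Z + T Y X Z) = -(T Y X Z + T X Y Z)) ∧
    -- M(X,Z)Y = -M(Y,Z)X
    (∀ X Y Z : 𝔪, L X Y Z = -(L Y X Z)) := by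
  refine ⟨fun h => ?_, fun X Y Z => by rw [add_comm], lt1⟩
  have hT : ∀ x y z : 𝔪, T x y z = 0 := by
    intro x y z
    have h1 := h x z y
    rw [← hext x y z] at h1
    have h2 : (2 : K) • T x y z = 0 := by
      rw [two_smul]
      linear_combination (norm := abel) -h1
    have := congrArg (fun w => (⅟(2:K)) • w) h2
    simpa [smul_smul] using this
  exact ⟨hT, fun x y z => by rw [← hext, hT, hT, sub_zero]⟩
end

section
/- Let K be a commutative ring in which 2 is invertible, 𝔤 a Lie algebra over K with an involutive Lie algebra automorphism σ, and (W, τ) a (𝔤,σ)-module with involution, i.e. W is a 𝔤-module and τ : W → W is a K-linear involution with τ(X•w) = σ(X)•τ(w) for all X ∈ 𝔤, w ∈ W. Equip the dual module W* = Hom_K(W, K) with the dual 𝔤-action (X•f)(w) := -f(X•w) and with the transpose involution τ*(f) := f∘τ. Then (W*, τ*) is again a (𝔤,σ)-module with involution: (τ*)² = id and τ*(X•f) = σ(X)•τ*(f) for all X ∈ 𝔤, f ∈ W*. Moreover, for X, Z in the -1-eigenspace 𝔪 of σ, the operator -ρ*(Z)∘ρ*(X) on W* (where ρ*(X)f :=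 X•f) equals the dual operator of -ρ(X)∘ρ(Z) on W; i.e. the m-component of the dual representation satisfies m*(X,Z) = m(Z,X)*. -/
/- Section 4.2: the dual of a (𝔤,σ)-module with involution (W, τ), with the
dual action (X•f)(w) = -f(X•w) and the transpose involution τ*(f) = f∘τ, is
again a (𝔤,σ)-module with involution; moreover for X, Z in the
-1-eigenspace 𝔪 of σ, the m-component of the dual representation satisfies
m*(X,Z) = m(Z,X)*, i.e. -ρ*(Z)∘ρ*(X) = (-ρ(X)∘ρ(Z))*. -/
theorem dual_module_with_involution
    (K : Type*) [CommRing K] [Invertible (2 : K)]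
    (𝔤 : Type*) [LieRing 𝔤] [LieAlgebra K 𝔤]
    (σ : 𝔤 →ₗ[K] 𝔤)
    (hinv : ∀ X, σ (σ X) = X)
    (hbr : ∀ X Y, σ ⁅X, Y⁆ = ⁅σ X, σ Y⁆)
    (W : Type*) [AddCommGroup W] [Module K W]
    (ρ : 𝔤 →ₗ[K] Module.End K W)
    (hρ : ∀ X Y, ρ ⁅X, Y⁆ = ρ X * ρ Y - ρ Y * ρ X)
    (τ : W →ₗ[K] W)
    (hτ2 : ∀ w, τ (τ w) = w)
    (hτρ : ∀ X w, τ (ρ X w) = ρ (σ X) (τ w)) :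
    let ρd : 𝔤 → Module.End K (Module.Dual K W) := fun X => -(ρ X).dualMap
    let τd : Module.End K (Module.Dual K W) := τ.dualMap
    -- τ* is an involution
    (∀ f : Module.Dual K W, τd (τd f) = f) ∧
    -- τ* is compatible with σ
    (∀ (X : 𝔤) (f : Module.Dual K W), τd (ρd X f) = ρd (σ X) (τd f)) ∧
    -- the dual action is a 𝔤-module structure
    (∀ X Y : 𝔤, ρd ⁅X, Y⁆ = ρd X * ρd Y - ρd Y * ρd X) ∧
    -- m*(X,Z) = m(Z,X)* for X, Z in the -1-eigenspace of σ
    (∀ X Z : 𝔤, σ X = -X → σ Z = -Z →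
      -(ρd Z * ρd X) = LinearMap.dualMap (-(ρ X * ρ Z))) := by
  intro ρd τd
  refine ⟨?_, ?_, ?_, ?_⟩
  · intro f; ext w
    simp [τd, LinearMap.dualMap_apply', hτ2]
  · intro X f; ext w
    simp [τd, ρd, LinearMap.dualMap_apply', hτρ, hinv]
  · intro X Y; ext f w
    simp only [ρd, hρ]
    simp [LinearMap.dualMap_apply', mul_comm]
  · intro X Z hX hZ; ext f w
    simp [ρd, LinearMap.dualMap_apply']
end
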